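/- arXiv:2207.07063 — 3 statements merged into one kernel-verified Lean document; each statement's English description precedes it below -/
import Mathlib

section
/- Every element of a coassociative counital coalgebra C over a field k is contained in a finite-dimensional subcoalgebra of C. Consequently, C is the directed union of its finite-dimensional subcoalgebras. -/
open TensorProduct LinearMap

namespace FTCoalg

variable {k C : Type*} [Field k] [AddCommGroup C] [Module k C]

section contr
variable {M : Type*} [AddCommGroup M] [Module k M]

/-- Contract the left tensor factor with a functional. -/
noncomputable def contrL (f : C →ₗ[k] k) : C ⊗[k] M →ₗ[k] M :=
  TensorProduct.lift ((LinearMap.lsmul k M) ∘ₗ f)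

/-- Contract the right tensor factor with a functional. -/
noncomputable def contrR (f : C →ₗ[k] k) : M ⊗[k] C →ₗ[k] M :=
  TensorProduct.lift (((LinearMap.lsmul k M) ∘ₗ f).flip)

@[simp] lemma contrL_tmul (f : C →ₗ[k] k) (a : C) (m : M) :
    contrL f (a ⊗ₜ[k] m) = f a • m := rfl

@[simp] lemma contrR_tmul (f : C →ₗ[k] k) (a : C) (m : M) :
    contrR f (m ⊗ₜ[k] a) = f a • m := rfl

end contr

/-- Over a field, `(D ⊗ C) ⊓ (C ⊗ D) ≤ D ⊗ D` inside `C ⊗ C`. -/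
lemma mem_range_mapIncl (D : Submodule k C) (u : C ⊗[k] C)
    (h1 : u ∈ LinearMap.range (TensorProduct.map D.subtype (LinearMap.id (R := k) (M := C))))
    (h2 : u ∈ LinearMap.range (TensorProduct.map (LinearMap.id (R := k) (M := C)) D.subtype)) :
    u ∈ LinearMap.range (TensorProduct.map D.subtype D.subtype) := by
  obtain ⟨E, hE⟩ := D.exists_isCompl
  set pr : C →ₗ[k] D := D.projectionOnto E hE with hpr
  set π : C →ₗ[k] C := D.subtype ∘ₗ pr with hπ
  have hπs : π ∘ₗ D.subtype = D.subtype := by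
    ext d; simp [hπ, hpr, Submodule.projectionOnto_apply_left hE]
  have hL : ∀ w ∈ LinearMap.range (TensorProduct.map D.subtype (LinearMap.id (R := k) (M := C))),
      TensorProduct.map π LinearMap.id w = w := by
    rintro w ⟨v, rfl⟩
    rw [← LinearMap.comp_apply, ← TensorProduct.map_comp, hπs, LinearMap.id_comp]
  have hR : TensorProduct.map LinearMap.id π u = u := by
    obtain ⟨v, rfl⟩ := h2
    rw [← LinearMap.comp_apply, ← TensorProduct.map_comp, hπs, LinearMap.id_comp]
  have key : u = TensorProduct.map D.subtype D.subtype (TensorProduct.map pr pr u) := by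
    conv_lhs => rw [← hL u h1, ← hR]
    rw [← LinearMap.comp_apply, ← TensorProduct.map_comp, LinearMap.comp_id, LinearMap.id_comp]
    rw [hπ, ← LinearMap.comp_apply, ← TensorProduct.map_comp]
  exact key ▸ ⟨_, rfl⟩


lemma exists_multiset2 (w : C ⊗[k] C) :
    ∃ m : Multiset (C × C), w = (m.map fun p => p.1 ⊗ₜ[k] p.2).sum := by
  induction w with
  | zero => exact ⟨0, by simp⟩
  | tmul a b => exact ⟨{(a, b)}, by simp⟩
  | add u v hu hv =>
      obtain ⟨m1, rfl⟩ := hu; obtain ⟨m2, rfl⟩ := hv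
      exact ⟨m1 + m2, by simp⟩

lemma exists_multiset3 (t : (C ⊗[k] C) ⊗[k] C) :
    ∃ m : Multiset (C × C × C),
      t = (m.map fun p => (p.1 ⊗ₜ[k] p.2.1) ⊗ₜ[k] p.2.2).sum := by
  induction t with
  | zero => exact ⟨0, by simp⟩
  | tmul w c =>
      obtain ⟨m2, rfl⟩ := exists_multiset2 w
      refine ⟨m2.map fun p => (p.1, p.2, c), ?_⟩
      rw [Multiset.map_map]
      rw [show ((m2.map fun p => p.1 ⊗ₜ[k] p.2).sum ⊗ₜ[k] c)
          = ((TensorProduct.mk k (C ⊗[k] C) C).flip c) (m2.map fun p => p.1 ⊗ₜ[k] p.2).sum from rfl,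
        map_multiset_sum, Multiset.map_map]
      rfl
  | add u v hu hv =>
      obtain ⟨m1, rfl⟩ := hu; obtain ⟨m2, rfl⟩ := hv
      exact ⟨m1 + m2, by simp⟩

/-- All double contractions of a fixed tensor lie in a common finite-dimensional subspace. -/
lemma exists_fd (t : (C ⊗[k] C) ⊗[k] C) :
    ∃ V : Submodule k C, FiniteDimensional k V ∧
      ∀ f g : C →ₗ[k] k, contrL f (contrR g t) ∈ V := by
  have inner : ∀ w : C ⊗[k] C, ∃ V : Submodule k C, FiniteDimensional k V ∧
      ∀ f : C →ₗ[k] k, contrL f w ∈ V := by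
    intro w
    induction w with
    | zero => exact ⟨⊥, inferInstance, fun f => by simp⟩
    | tmul a b =>
        exact ⟨Submodule.span k {b}, inferInstance, fun f => by
          simp only [contrL_tmul]
          exact Submodule.smul_mem _ _ (Submodule.mem_span_singleton_self b)⟩
    | add u v hu hv =>
        obtain ⟨V1, h1, hm1⟩ := hu; obtain ⟨V2, h2, hm2⟩ := hv
        exact ⟨V1 ⊔ V2, inferInstance, fun f => by
          rw [map_add]
          exact Submodule.add_mem _ (Submodule.mem_sup_left (hm1 f))
            (Submodule.mem_sup_right (hm2 f))⟩
  induction t with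
  | zero => exact ⟨⊥, inferInstance, fun f g => by simp⟩
  | tmul w c =>
      obtain ⟨V, hV, hm⟩ := inner w
      refine ⟨V, hV, fun f g => ?_⟩
      simp only [contrR_tmul, map_smul]
      exact Submodule.smul_mem _ _ (hm f)
  | add u v hu hv =>
      obtain ⟨V1, h1, hm1⟩ := hu; obtain ⟨V2, h2, hm2⟩ := hv
      refine ⟨V1 ⊔ V2, inferInstance, fun f g => ?_⟩
      rw [map_add, map_add]
      exact Submodule.add_mem _ (Submodule.mem_sup_left (hm1 f g))
        (Submodule.mem_sup_right (hm2 f g))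


lemma mem_right (D : Submodule k C) (f : C →ₗ[k] k) (w : C ⊗[k] C) {d : C} (hd : d ∈ D) :
    contrL f ((TensorProduct.assoc k C C C) (w ⊗ₜ[k] d)) ∈
      LinearMap.range (TensorProduct.map (LinearMap.id (R := k) (M := C)) D.subtype) := by
  induction w with
  | zero => rw [TensorProduct.zero_tmul, map_zero, map_zero]; exact Submodule.zero_mem _
  | tmul p q =>
      rw [TensorProduct.assoc_tmul, contrL_tmul]
      exact ⟨f p • (q ⊗ₜ[k] (⟨d, hd⟩ : D)), by simp⟩
  | add u v hu hv =>
      rw [TensorProduct.add_tmul, map_add, map_add]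
      exact Submodule.add_mem _ hu hv

lemma mem_left (D : Submodule k C) (g : C →ₗ[k] k) (w : C ⊗[k] C) {d : C} (hd : d ∈ D) :
    contrR g ((TensorProduct.assoc k C C C).symm (d ⊗ₜ[k] w)) ∈
      LinearMap.range (TensorProduct.map D.subtype (LinearMap.id (R := k) (M := C))) := by
  induction w with
  | zero => rw [TensorProduct.tmul_zero, map_zero, map_zero]; exact Submodule.zero_mem _
  | tmul p q =>
      rw [TensorProduct.assoc_symm_tmul, contrR_tmul]
      exact ⟨g q • ((⟨d, hd⟩ : D) ⊗ₜ[k] p), by simp⟩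
  | add u v hu hv =>
      rw [TensorProduct.tmul_add, map_add, map_add]
      exact Submodule.add_mem _ hu hv


variable [Coalgebra k C]

lemma counit_contrL (u : C ⊗[k] C) :
    contrL (Coalgebra.counit (R := k)) u = TensorProduct.lid k C ((Coalgebra.counit (R := k)).rTensor C u) := by
  induction u with
  | zero => simp
  | tmul a b => simp [contrL_tmul]
  | add a b ha hb => simp [map_add, ha, hb]

lemma counit_contrR (u : C ⊗[k] C) :
    contrR (Coalgebra.counit (R := k)) u = TensorProduct.rid k C ((Coalgebra.counit (R := k)).lTensor C u) := by
  induction u with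
  | zero => simp
  | tmul a b => simp [contrR_tmul]
  | add a b ha hb => simp [map_add, ha, hb]

lemma contrL_counit_comul (a : C) :
    contrL (Coalgebra.counit (R := k)) (Coalgebra.comul (R := k) a) = a := by
  rw [counit_contrL, Coalgebra.rTensor_counit_comul]; simp

lemma contrR_counit_comul (a : C) :
    contrR (Coalgebra.counit (R := k)) (Coalgebra.comul (R := k) a) = a := by
  rw [counit_contrR, Coalgebra.lTensor_counit_comul]; simp

set_option maxHeartbeats 3200000 in
lemma main (x : C) : ∃ D : Submodule k C, FiniteDimensional k D ∧ x ∈ D ∧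
    ∀ y ∈ D, Coalgebra.comul (R := k) y ∈
      LinearMap.range (TensorProduct.map D.subtype D.subtype) := by
  classical
  set Δ : C →ₗ[k] C ⊗[k] C := Coalgebra.comul (R := k) with hΔdef
  set B := Module.Basis.ofVectorSpace k C with hBdef
  set t : (C ⊗[k] C) ⊗[k] C := Δ.rTensor C (Δ x) with htdef
  set X : Module.Basis.ofVectorSpaceIndex k C → Module.Basis.ofVectorSpaceIndex k C → C :=
    fun i j => contrL (B.coord i) (contrR (B.coord j) t) with hXdef
  set D : Submodule k C := Submodule.span k {c | ∃ i j, X i j = c} with hDdef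
  have hXD : ∀ i j, X i j ∈ D := fun i j => Submodule.subset_span ⟨i, j, rfl⟩
  -- finite dimensionality
  have hfd : FiniteDimensional k D := by
    obtain ⟨V, hV, hm⟩ := exists_fd t
    have hle : D ≤ V := Submodule.span_le.2 (by rintro c ⟨i, j, rfl⟩; exact hm _ _)
    exact Submodule.finiteDimensional_of_le hle
  -- multiset representation and supports
  obtain ⟨m, hmrep⟩ := exists_multiset3 t
  set F₁ : Finset (Module.Basis.ofVectorSpaceIndex k C) :=
    m.toFinset.sup (fun p => (B.repr p.1).support) with hF₁def
  set F₂ : Finset (Module.Basis.ofVectorSpaceIndex k C) :=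
    m.toFinset.sup (fun p => (B.repr p.2.2).support) with hF₂def
  have hsupp1 : ∀ p ∈ m, (B.repr p.1).support ⊆ F₁ := by
    intro p hp
    exact Finset.le_sup (f := fun p => (B.repr p.1).support) (Multiset.mem_toFinset.2 hp)
  have hsupp2 : ∀ p ∈ m, (B.repr p.2.2).support ⊆ F₂ := by
    intro p hp
    exact Finset.le_sup (f := fun p => (B.repr p.2.2).support) (Multiset.mem_toFinset.2 hp)
  -- explicit formula for X
  have hX : ∀ i j, X i j =
      (m.map fun p => B.repr p.2.2 j • (B.repr p.1 i • p.2.1)).sum := by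
    intro i j
    rw [hXdef]
    simp only
    rw [hmrep, map_multiset_sum, Multiset.map_map, map_multiset_sum, Multiset.map_map]
    congr 1
    refine Multiset.map_congr rfl fun p hp => ?_
    simp [contrR_tmul, contrL_tmul, Module.Basis.coord_apply]
  -- vanishing outside the supports
  have hvan : ∀ i j, (i ∉ F₁ ∨ j ∉ F₂) → X i j = 0 := by
    intro i j hij
    rw [hX i j]
    refine Multiset.sum_eq_zero fun c hc => ?_
    obtain ⟨p, hp, rfl⟩ := Multiset.mem_map.1 hc
    rcases hij with h | h
    · rw [Finsupp.notMem_support_iff.1 (fun hmem => h (hsupp1 p hp hmem)), zero_smul, smul_zero]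
    · rw [Finsupp.notMem_support_iff.1 (fun hmem => h (hsupp2 p hp hmem)), zero_smul]
  -- reconstruction
  have hrec : ∑ i ∈ F₁, ∑ j ∈ F₂, (B i ⊗ₜ[k] X i j) ⊗ₜ[k] B j = t := by
    set L : Module.Basis.ofVectorSpaceIndex k C → Module.Basis.ofVectorSpaceIndex k C →
        C →ₗ[k] (C ⊗[k] C) ⊗[k] C := fun i j =>
      ((TensorProduct.mk k (C ⊗[k] C) C).flip (B j)) ∘ₗ (TensorProduct.mk k C C (B i)) with hLdef
    have hLapp : ∀ i j (c : C), L i j c = (B i ⊗ₜ[k] c) ⊗ₜ[k] B j := fun i j c => rfl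
    set Φ : (C ⊗[k] C) ⊗[k] C →ₗ[k] (C ⊗[k] C) ⊗[k] C :=
      ∑ i ∈ F₁, ∑ j ∈ F₂, (L i j) ∘ₗ (contrL (B.coord i)) ∘ₗ (contrR (B.coord j)) with hΦdef
    have hΦt : Φ t = ∑ i ∈ F₁, ∑ j ∈ F₂, (B i ⊗ₜ[k] X i j) ⊗ₜ[k] B j := by
      rw [hΦdef]
      simp only [LinearMap.sum_apply, LinearMap.comp_apply]
      rfl
    rw [← hΦt]
    conv_lhs => rw [hmrep]
    rw [map_multiset_sum, Multiset.map_map]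
    have per : ∀ p ∈ m, Φ ((p.1 ⊗ₜ[k] p.2.1) ⊗ₜ[k] p.2.2) = (p.1 ⊗ₜ[k] p.2.1) ⊗ₜ[k] p.2.2 := by
      rintro ⟨a, b, c⟩ hp
      have ha : ∑ i ∈ F₁, B.repr a i • B i = a := by
        have h1 := B.linearCombination_repr a
        rw [Finsupp.linearCombination_apply] at h1
        calc ∑ i ∈ F₁, B.repr a i • B i
            = (B.repr a).sum fun i d => d • B i :=
              (Finsupp.sum_of_support_subset (B.repr a) (hsupp1 _ hp) (fun i d => d • B i)
                (fun i _ => zero_smul k (B i))).symm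
          _ = a := h1
      have hc : ∑ j ∈ F₂, B.repr c j • B j = c := by
        have h1 := B.linearCombination_repr c
        rw [Finsupp.linearCombination_apply] at h1
        calc ∑ j ∈ F₂, B.repr c j • B j
            = (B.repr c).sum fun j d => d • B j :=
              (Finsupp.sum_of_support_subset (B.repr c) (hsupp2 _ hp) (fun j d => d • B j)
                (fun j _ => zero_smul k (B j))).symm
          _ = c := h1
      rw [hΦdef]
      simp only [LinearMap.sum_apply, LinearMap.comp_apply, contrR_tmul, map_smul,
        contrL_tmul, Module.Basis.coord_apply, hLapp]
      simp_rw [TensorProduct.tmul_smul, TensorProduct.smul_tmul']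
      calc ∑ i ∈ F₁, ∑ j ∈ F₂, B.repr c j • (B.repr a i • ((B i ⊗ₜ[k] b) ⊗ₜ[k] B j))
          = ∑ i ∈ F₁, B.repr a i • ((B i ⊗ₜ[k] b) ⊗ₜ[k] c) := by
            refine Finset.sum_congr rfl fun i _ => ?_
            have h2 : ∀ j, B.repr c j • (B.repr a i • ((B i ⊗ₜ[k] b) ⊗ₜ[k] B j))
                = B.repr a i • ((B i ⊗ₜ[k] b) ⊗ₜ[k] (B.repr c j • B j)) := fun j => by
              rw [smul_comm, TensorProduct.tmul_smul]
            simp_rw [h2]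
            rw [← Finset.smul_sum, ← TensorProduct.tmul_sum, hc]
        _ = (a ⊗ₜ[k] b) ⊗ₜ[k] c := by
            have h2 : ∀ i, B.repr a i • ((B i ⊗ₜ[k] b) ⊗ₜ[k] c)
                = ((B.repr a i • B i) ⊗ₜ[k] b) ⊗ₜ[k] c := fun i => by
              rw [TensorProduct.smul_tmul', TensorProduct.smul_tmul']
            simp_rw [h2]
            rw [← TensorProduct.sum_tmul, ← TensorProduct.sum_tmul, ha]
    rw [show (⇑Φ ∘ fun p : C × C × C => (p.1 ⊗ₜ[k] p.2.1) ⊗ₜ[k] p.2.2)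
        = fun p : C × C × C => Φ ((p.1 ⊗ₜ[k] p.2.1) ⊗ₜ[k] p.2.2) from rfl,
      Multiset.map_congr rfl per, ← hmrep]
  -- the associated tensor and the two Δ-expanded tensors
  set t' : C ⊗[k] (C ⊗[k] C) := Δ.lTensor C (Δ x) with ht'def
  have hassoc_t : (TensorProduct.assoc k C C C) t = t' := Coalgebra.coassoc_apply x
  have hrec' : ∑ i ∈ F₁, ∑ j ∈ F₂, B i ⊗ₜ[k] (X i j ⊗ₜ[k] B j) = t' := by
    rw [← hassoc_t, ← hrec, map_sum]
    refine Finset.sum_congr rfl fun i _ => ?_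
    rw [map_sum]
    exact Finset.sum_congr rfl fun j _ => TensorProduct.assoc_tmul _ _ _
  set T₁ : (C ⊗[k] (C ⊗[k] C)) ⊗[k] C := (Δ.lTensor C).rTensor C t with hT₁def
  have hT₁rec : T₁ = ∑ i ∈ F₁, ∑ j ∈ F₂, (B i ⊗ₜ[k] Δ (X i j)) ⊗ₜ[k] B j := by
    rw [hT₁def, ← hrec]
    simp only [map_sum, LinearMap.rTensor_tmul, LinearMap.lTensor_tmul]
  have hT₁alt : T₁ = ∑ i ∈ F₁, ∑ j ∈ F₂,
      ((TensorProduct.assoc k C C C) (Δ (B i) ⊗ₜ[k] X i j)) ⊗ₜ[k] B j := by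
    have e1 : T₁ = (((TensorProduct.assoc k C C C).toLinearMap).rTensor C)
        (((Δ.rTensor C).rTensor C) t) := by
      rw [hT₁def, htdef, ← LinearMap.rTensor_comp_apply, ← Coalgebra.coassoc,
        LinearMap.rTensor_comp, LinearMap.rTensor_comp]
      simp [LinearMap.comp_apply, hΔdef]
    rw [e1, ← hrec]
    simp only [map_sum, LinearMap.rTensor_tmul, LinearEquiv.coe_coe,
      LinearEquiv.coe_toLinearMap]
  set T₂ : C ⊗[k] ((C ⊗[k] C) ⊗[k] C) := (Δ.rTensor C).lTensor C t' with hT₂def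
  have hT₂rec : T₂ = ∑ i ∈ F₁, ∑ j ∈ F₂, B i ⊗ₜ[k] (Δ (X i j) ⊗ₜ[k] B j) := by
    rw [hT₂def, ← hrec']
    simp only [map_sum, LinearMap.lTensor_tmul, LinearMap.rTensor_tmul]
  have hT₂alt : T₂ = ∑ i ∈ F₁, ∑ j ∈ F₂,
      B i ⊗ₜ[k] ((TensorProduct.assoc k C C C).symm (X i j ⊗ₜ[k] Δ (B j))) := by
    have e2 : T₂ = (((TensorProduct.assoc k C C C).symm.toLinearMap).lTensor C)
        (((Δ.lTensor C).lTensor C) t') := by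
      rw [hT₂def, ht'def, ← LinearMap.lTensor_comp_apply, ← Coalgebra.coassoc_symm,
        LinearMap.lTensor_comp, LinearMap.lTensor_comp]
      simp [LinearMap.comp_apply, hΔdef]
    rw [e2, ← hrec']
    simp only [map_sum, LinearMap.lTensor_tmul, LinearEquiv.coe_coe,
      LinearEquiv.coe_toLinearMap]
  -- extraction of `Δ (X i₀ j₀)` and the two memberships
  have hcomulX : ∀ i j, Δ (X i j) ∈
      LinearMap.range (TensorProduct.map D.subtype D.subtype) := by
    intro i₀ j₀
    by_cases hi₀ : i₀ ∈ F₁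
    · by_cases hj₀ : j₀ ∈ F₂
      · have hext1 : contrL (B.coord i₀) (contrR (B.coord j₀) T₁) = Δ (X i₀ j₀) := by
          rw [hT₁rec]
          simp only [map_sum, contrR_tmul, map_smul, contrL_tmul, Module.Basis.coord_apply,
            Module.Basis.repr_self, Finsupp.single_apply, ite_smul, one_smul, zero_smul,
            smul_zero, Finset.sum_ite_eq', hi₀, hj₀, if_true]
        have hext2 : contrR (B.coord j₀) (contrL (B.coord i₀) T₂) = Δ (X i₀ j₀) := by
          rw [hT₂rec]
          have hper : ∀ i j, contrR (B.coord j₀)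
              (contrL (B.coord i₀) (B i ⊗ₜ[k] (Δ (X i j) ⊗ₜ[k] B j)))
              = (if i = i₀ then (1 : k) else 0) • (if j = j₀ then (1 : k) else 0)
                  • Δ (X i j) := by
            intro i j
            rw [contrL_tmul, map_smul, contrR_tmul, Module.Basis.coord_apply, Module.Basis.coord_apply,
              Module.Basis.repr_self, Module.Basis.repr_self, Finsupp.single_apply, Finsupp.single_apply]
          simp only [map_sum, hper, ite_smul, one_smul, zero_smul, smul_zero]
          rw [Finset.sum_eq_single_of_mem i₀ hi₀ (fun i _ hne => by simp [hne])]
          simp [Finset.sum_ite_eq', hj₀]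
        refine mem_range_mapIncl D _ ?_ ?_
        · -- `D ⊗ C` side via T₂
          rw [← hext2, hT₂alt]
          simp only [map_sum, contrL_tmul, map_smul]
          refine Submodule.sum_mem _ fun i _ => Submodule.sum_mem _ fun j _ => ?_
          exact Submodule.smul_mem _ _ (mem_left D (B.coord j₀) (Δ (B j)) (hXD i j))
        · -- `C ⊗ D` side via T₁
          rw [← hext1, hT₁alt]
          simp only [map_sum, contrR_tmul, map_smul]
          refine Submodule.sum_mem _ fun i _ => Submodule.sum_mem _ fun j _ => ?_
          exact Submodule.smul_mem _ _ (mem_right D (B.coord i₀) (Δ (B i)) (hXD i j))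
      · rw [hvan i₀ j₀ (Or.inr hj₀), map_zero]; exact Submodule.zero_mem _
    · rw [hvan i₀ j₀ (Or.inl hi₀), map_zero]; exact Submodule.zero_mem _
  have hall : ∀ y ∈ D, Δ y ∈ LinearMap.range (TensorProduct.map D.subtype D.subtype) := by
    intro y hy
    have hle : D ≤ Submodule.comap Δ
        (LinearMap.range (TensorProduct.map D.subtype D.subtype)) :=
      Submodule.span_le.2 (by rintro c ⟨i, j, rfl⟩; exact hcomulX i j)
    exact hle hy
  -- `x` itself lies in `D`
  have hcompL : (contrL (Coalgebra.counit (R := k)) : C ⊗[k] C →ₗ[k] C) ∘ₗ Δ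
      = LinearMap.id := LinearMap.ext fun a => contrL_counit_comul a
  have hcompR : (contrR (Coalgebra.counit (R := k)) : C ⊗[k] C →ₗ[k] C) ∘ₗ Δ
      = LinearMap.id := LinearMap.ext fun a => contrR_counit_comul a
  have hΔx1 : Δ x ∈ LinearMap.range
      (TensorProduct.map D.subtype (LinearMap.id (R := k) (M := C))) := by
    have hθ : (LinearMap.rTensor C (contrL (Coalgebra.counit (R := k)))) t = Δ x := by
      rw [htdef, ← LinearMap.rTensor_comp_apply, hcompL, LinearMap.rTensor_id,
        LinearMap.id_apply]
    rw [← hθ, ← hrec]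
    simp only [map_sum, LinearMap.rTensor_tmul, contrL_tmul]
    refine Submodule.sum_mem _ fun i _ => Submodule.sum_mem _ fun j _ => ?_
    exact ⟨Coalgebra.counit (B i) • ((⟨X i j, hXD i j⟩ : D) ⊗ₜ[k] B j),
      by rw [map_smul, TensorProduct.map_tmul, TensorProduct.smul_tmul']; rfl⟩
  have hΔx2 : Δ x ∈ LinearMap.range
      (TensorProduct.map (LinearMap.id (R := k) (M := C)) D.subtype) := by
    have hθ : (LinearMap.lTensor C (contrR (Coalgebra.counit (R := k)))) t' = Δ x := by
      rw [ht'def, ← LinearMap.lTensor_comp_apply, hcompR, LinearMap.lTensor_id,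
        LinearMap.id_apply]
    rw [← hθ, ← hrec']
    simp only [map_sum, LinearMap.lTensor_tmul, contrR_tmul]
    refine Submodule.sum_mem _ fun i _ => Submodule.sum_mem _ fun j _ => ?_
    exact ⟨Coalgebra.counit (B j) • (B i ⊗ₜ[k] (⟨X i j, hXD i j⟩ : D)),
      by rw [map_smul, TensorProduct.map_tmul, TensorProduct.tmul_smul]; rfl⟩
  have hΔx := mem_range_mapIncl D _ hΔx1 hΔx2
  have hx : x ∈ D := by
    obtain ⟨v, hv⟩ := hΔx
    have hmem : ∀ w : D ⊗[k] D,
        contrR (Coalgebra.counit (R := k)) (TensorProduct.map D.subtype D.subtype w) ∈ D := by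
      intro w
      induction w with
      | zero => rw [map_zero, map_zero]; exact D.zero_mem
      | tmul d e =>
          rw [TensorProduct.map_tmul, contrR_tmul]
          exact D.smul_mem _ d.2
      | add u v hu hv => rw [map_add, map_add]; exact D.add_mem hu hv
    have hx' := hmem v
    rw [hv] at hx'
    rwa [contrR_counit_comul] at hx'
  exact ⟨D, hfd, hx, hall⟩

end FTCoalg

/-- fundamental theorem of coalgebras: every element of a coassociative counital
coalgebra `C` over a field `k` lies in a finite-dimensional subcoalgebra `D ⊆ C`
(a subspace with `μ(D) ⊆ D ⊗ D`); moreover any two finite-dimensional subcoalgebras are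
contained in a common finite-dimensional subcoalgebra, so `C` is the directed union of its
finite-dimensional subcoalgebras. -/
theorem exists_finiteDimensional_subcoalgebra
    (k C : Type) [Field k] [AddCommGroup C] [Module k C] [Coalgebra k C] :
    (∀ x : C, ∃ D : Submodule k C, FiniteDimensional k D ∧ x ∈ D ∧
      ∀ y ∈ D, Coalgebra.comul (R := k) y ∈
        LinearMap.range (TensorProduct.map D.subtype D.subtype)) ∧
    (∀ D₁ D₂ : Submodule k C,
      FiniteDimensional k D₁ → FiniteDimensional k D₂ →
      (∀ y ∈ D₁, Coalgebra.comul (R := k) y ∈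
        LinearMap.range (TensorProduct.map D₁.subtype D₁.subtype)) →
      (∀ y ∈ D₂, Coalgebra.comul (R := k) y ∈
        LinearMap.range (TensorProduct.map D₂.subtype D₂.subtype)) →
      ∃ D : Submodule k C, FiniteDimensional k D ∧ D₁ ≤ D ∧ D₂ ≤ D ∧
        ∀ y ∈ D, Coalgebra.comul (R := k) y ∈
          LinearMap.range (TensorProduct.map D.subtype D.subtype)) := by
  constructor
  · exact fun x => FTCoalg.main x
  · intro D₁ D₂ h₁ h₂ hc₁ hc₂
    refine ⟨D₁ ⊔ D₂, inferInstance, le_sup_left, le_sup_right, ?_⟩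
    intro y hy
    obtain ⟨y₁, hy₁, y₂, hy₂, rfl⟩ := Submodule.mem_sup.1 hy
    have m₁ : Coalgebra.comul (R := k) y₁ ∈
        LinearMap.range (TensorProduct.map (D₁ ⊔ D₂).subtype (D₁ ⊔ D₂).subtype) :=
      TensorProduct.range_mapIncl_mono (le_sup_left : D₁ ≤ D₁ ⊔ D₂) le_sup_left (hc₁ y₁ hy₁)
    have m₂ : Coalgebra.comul (R := k) y₂ ∈
        LinearMap.range (TensorProduct.map (D₁ ⊔ D₂).subtype (D₁ ⊔ D₂).subtype) :=
      TensorProduct.range_mapIncl_mono (le_sup_right : D₂ ≤ D₁ ⊔ D₂) le_sup_right (hc₂ y₂ hy₂)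
    rw [map_add]
    exact Submodule.add_mem _ m₁ m₂
end

section
/- Let M be a finite-dimensional left comodule over a coalgebra C over a field k. Then there exists a finite-dimensional subcoalgebra E ⊆ C such that the image of the coaction map ν: M → C⊗M is contained in E⊗M. -/
open TensorProduct

section Aux

variable {k : Type} [Field k] {M : Type} [AddCommGroup M] [Module k M]
  {ι : Type} [Fintype ι] [DecidableEq ι] (b : Module.Basis ι k M)
  (X : Type) [AddCommGroup X] [Module k X]

/-- Coefficient extraction map for a tensor `X ⊗ M` relative to a basis of `M`. -/
noncomputable def coeffAux (i : ι) : X ⊗[k] M →ₗ[k] X :=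
  (TensorProduct.rid k X).toLinearMap ∘ₗ LinearMap.lTensor X (b.coord i)

lemma coeffAux_tmul (i : ι) (a : X) (m : M) :
    coeffAux b X i (a ⊗ₜ[k] m) = b.repr m i • a := by
  simp [coeffAux]

lemma coeffAux_tmul_basis (i j : ι) (a : X) :
    coeffAux b X i (a ⊗ₜ[k] b j) = if j = i then a else 0 := by
  rw [coeffAux_tmul, Module.Basis.repr_self, Finsupp.single_apply]
  split <;> simp

lemma sum_coeffAux (z : X ⊗[k] M) :
    ∑ i, (coeffAux b X i z) ⊗ₜ[k] b i = z := by
  induction z using TensorProduct.induction_on with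
  | zero => simp
  | tmul a m =>
      simp only [coeffAux_tmul]
      simp_rw [TensorProduct.smul_tmul, ← TensorProduct.tmul_sum]
      rw [b.sum_repr]
  | add u v hu hv =>
      simp only [map_add, TensorProduct.add_tmul, Finset.sum_add_distrib, hu, hv]

lemma coeffAux_sum (i : ι) (t : ι → X) :
    coeffAux b X i (∑ j, t j ⊗ₜ[k] b j) = t i := by
  rw [map_sum]
  simp [coeffAux_tmul_basis]

end Aux

/-- if `M` is a finite-dimensional left comodule over a coalgebra `C` over a
field `k`, then there is a finite-dimensional subcoalgebra `E ⊆ C` such that the image of the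
coaction map `ρ : M → C ⊗ M` is contained in `E ⊗ M`. -/
theorem exists_finiteDimensional_subcoalgebra_of_finite_comodule
    (k C M : Type) [Field k] [AddCommGroup C] [Module k C] [Coalgebra k C]
    [AddCommGroup M] [Module k M] [FiniteDimensional k M]
    (ρ : M →ₗ[k] C ⊗[k] M)
    (hcoassoc :
      (TensorProduct.assoc k C C M).toLinearMap ∘ₗ
          LinearMap.rTensor M (Coalgebra.comul (R := k)) ∘ₗ ρ =
        LinearMap.lTensor C ρ ∘ₗ ρ)
    (hcounit :
      (TensorProduct.lid k M).toLinearMap ∘ₗ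
          LinearMap.rTensor M (Coalgebra.counit (R := k)) ∘ₗ ρ = LinearMap.id) :
    ∃ E : Submodule k C, FiniteDimensional k E ∧
      (∀ y ∈ E, Coalgebra.comul (R := k) y ∈
        LinearMap.range (TensorProduct.map E.subtype E.subtype)) ∧
      ∀ x : M, ρ x ∈ LinearMap.range (LinearMap.rTensor M E.subtype) := by
  classical
  set ι := Fin (Module.finrank k M)
  let b : Module.Basis ι k M := Module.finBasis k M
  -- the matrix coefficients
  let d : ι → M →ₗ[k] C := fun i => coeffAux b C i ∘ₗ ρ
  have hρ : ∀ x : M, ρ x = ∑ j, (d j x) ⊗ₜ[k] b j := fun x => (sum_coeffAux b C (ρ x)).symm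
  -- the key identity : Δ (d i x) = ∑ j, d j x ⊗ d i (b j)
  have key : ∀ (x : M) (i : ι),
      Coalgebra.comul (R := k) (d i x) = ∑ j, (d j x) ⊗ₜ[k] (d i (b j)) := by
    intro x i
    have h1 := LinearMap.congr_fun hcoassoc x
    simp only [LinearMap.comp_apply, LinearEquiv.coe_coe] at h1
    have h2 : LinearMap.rTensor M (Coalgebra.comul (R := k)) (ρ x) =
        (TensorProduct.assoc k C C M).symm (LinearMap.lTensor C ρ (ρ x)) := by
      rw [← h1, LinearEquiv.symm_apply_apply]
    have hL : LinearMap.rTensor M (Coalgebra.comul (R := k)) (ρ x) =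
        ∑ j, (Coalgebra.comul (R := k) (d j x)) ⊗ₜ[k] b j := by
      rw [hρ x, map_sum]; simp [LinearMap.rTensor_tmul]
    have hR : (TensorProduct.assoc k C C M).symm (LinearMap.lTensor C ρ (ρ x)) =
        ∑ l, (∑ j, (d j x) ⊗ₜ[k] (d l (b j))) ⊗ₜ[k] b l := by
      rw [hρ x, map_sum]
      simp only [LinearMap.lTensor_tmul]
      have : ∀ j : ι, (TensorProduct.assoc k C C M).symm ((d j x) ⊗ₜ[k] ρ (b j)) =
          ∑ l, ((d j x) ⊗ₜ[k] (d l (b j))) ⊗ₜ[k] b l := by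
        intro j
        rw [hρ (b j), TensorProduct.tmul_sum, map_sum]
        simp [TensorProduct.assoc_symm_tmul]
      rw [map_sum, Finset.sum_congr rfl fun j _ => this j, Finset.sum_comm]
      simp [TensorProduct.sum_tmul]
    have h3 : (∑ j, (Coalgebra.comul (R := k) (d j x)) ⊗ₜ[k] b j : (C ⊗[k] C) ⊗[k] M) =
        ∑ l, (∑ j, (d j x) ⊗ₜ[k] (d l (b j))) ⊗ₜ[k] b l := by
      rw [← hL, ← hR, h2]
    have h4 := congrArg (coeffAux b (C ⊗[k] C) i) h3
    rwa [coeffAux_sum, coeffAux_sum] at h4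
  -- define E
  let E : Submodule k C :=
    Submodule.span k (Set.range fun p : ι × ι => d p.1 (b p.2))
  have hmem : ∀ i j : ι, d i (b j) ∈ E := fun i j =>
    Submodule.subset_span ⟨(i, j), rfl⟩
  refine ⟨E, ?_, ?_, ?_⟩
  · exact FiniteDimensional.span_of_finite k (Set.finite_range _)
  · intro y hy
    induction hy using Submodule.span_induction with
    | mem y hy =>
        obtain ⟨⟨i, j⟩, rfl⟩ := hy
        rw [key (b j) i]
        apply Submodule.sum_mem
        intro l _
        exact ⟨(⟨d l (b j), hmem l j⟩ : E) ⊗ₜ[k] (⟨d i (b l), hmem i l⟩ : E),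
          by simp [TensorProduct.map_tmul]⟩
    | zero => simp
    | add u v _ _ hu hv => rw [map_add]; exact add_mem hu hv
    | smul a u _ hu => rw [map_smul]; exact Submodule.smul_mem _ a hu
  · intro x
    have hdx : ∀ j : ι, d j x ∈ E := by
      intro j
      have hx : x ∈ Submodule.span k (Set.range b) := by rw [b.span_eq]; trivial
      have := Submodule.mem_map_of_mem (f := d j) hx
      rw [Submodule.map_span] at this
      refine Submodule.span_le.mpr ?_ this
      rintro _ ⟨_, ⟨l, rfl⟩, rfl⟩
      exact hmem j l
    refine ⟨∑ j, (⟨d j x, hdx j⟩ : E) ⊗ₜ[k] b j, ?_⟩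
    rw [map_sum, hρ x]
    simp [LinearMap.rTensor_tmul]
end

section
/- Let (B, d, h) be a curved DG-ring and let (M, d_M) be a left CDG-module over B. Suppose L ⊆ M is a graded B-submodule such that the composite L ↪ M →^{d_M} M ↠ M/L is an isomorphism of graded abelian groups (of degree 1) from L onto (M/L)[1]. Then the CDG-module (M, d_M) is contractible: there exists a B-linear homogeneous map t: M → M of degree −1 with d_M ∘ t + t ∘ d_M = id_M. -/
lemma decompose_shift_aux (M : Type) [AddCommGroup M]
    (ℳ : ℤ → AddSubgroup M) [DirectSum.Decomposition ℳ]
    (f : M →+ M) (hf : ∀ i : ℤ, ∀ x ∈ ℳ i, f x ∈ ℳ (i + 1))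
    (j : ℤ) (y : M) :
    (DirectSum.decompose ℳ (f y) (j + 1) : M) = f (DirectSum.decompose ℳ y j : M) := by
  classical
  let c : M →+ M := AddMonoidHom.mk' (fun z => (DirectSum.decompose ℳ z (j+1) : M))
    (by intro a b; simp [DirectSum.decompose_add])
  have key : ∀ k : ℤ, ∀ x ∈ ℳ k,
      (DirectSum.decompose ℳ (f x) (j+1) : M) = if k = j then f x else 0 := by
    intro k x hx
    by_cases hk : k = j
    · subst hk
      rw [DirectSum.decompose_of_mem_same ℳ (hf k x hx), if_pos rfl]
    · rw [DirectSum.decompose_of_mem_ne ℳ (hf k x hx) (by omega), if_neg hk]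
  calc (DirectSum.decompose ℳ (f y) (j+1) : M)
      = c (f y) := rfl
    _ = c (f (∑ k ∈ (DirectSum.decompose ℳ y).support, (DirectSum.decompose ℳ y k : M))) := by
        rw [DirectSum.sum_support_decompose]
    _ = ∑ k ∈ (DirectSum.decompose ℳ y).support,
          (DirectSum.decompose ℳ (f (DirectSum.decompose ℳ y k : M)) (j+1) : M) := by
        rw [map_sum, map_sum]; rfl
    _ = ∑ k ∈ (DirectSum.decompose ℳ y).support,
          (if k = j then f (DirectSum.decompose ℳ y k : M) else 0) := by
        refine Finset.sum_congr rfl fun k _ => ?_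
        exact key k _ (SetLike.coe_mem _)
    _ = f (DirectSum.decompose ℳ y j : M) := by
        rw [Finset.sum_ite_eq' ]
        by_cases hj : j ∈ (DirectSum.decompose ℳ y).support
        · rw [if_pos hj]
        · rw [if_neg hj]
          rw [DFinsupp.notMem_support_iff] at hj
          rw [hj]
          simp



/-- a CDG-module freely generated by a graded submodule is contractible.
Let `(B, d, h)` be a curved DG-ring and `(M, d_M)` a left CDG-module over it.  If `L ⊆ M` is a
graded `B`-submodule such that the composite `L ↪ M → M ↠ M/L` (inclusion, then `d_M`, then
the projection) is bijective (an isomorphism of graded abelian groups of degree 1 onto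
`(M/L)[1]`), then `(M, d_M)` is contractible: there is a homogeneous `B`-linear map
`t : M → M` of degree `−1` with `d_M ∘ t + t ∘ d_M = id`. -/
theorem cdgModule_contractible_of_freely_generated
    (B : Type) [Ring B] (𝒜 : ℤ → AddSubgroup B) [GradedRing 𝒜]
    (d : B →+ B)
    (hdeg : ∀ (i : ℤ), ∀ x ∈ 𝒜 i, d x ∈ 𝒜 (i + 1))
    (hleib : ∀ (i : ℤ), ∀ b ∈ 𝒜 i, ∀ c : B,
      d (b * c) = d b * c + (((-1 : ℤˣ) ^ i : ℤˣ) : ℤ) • (b * d c))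
    (h : B) (hh : h ∈ 𝒜 2)
    (hd2 : ∀ b : B, d (d b) = h * b - b * h)
    (hdh : d h = 0)
    -- the graded left CDG-module (M, d_M)
    (M : Type) [AddCommGroup M] [Module B M]
    (ℳ : ℤ → AddSubgroup M) [DirectSum.Decomposition ℳ]
    (hsmulM : ∀ (i j : ℤ), ∀ b ∈ 𝒜 i, ∀ x ∈ ℳ j, b • x ∈ ℳ (i + j))
    (dM : M →+ M)
    (hdegM : ∀ (i : ℤ), ∀ x ∈ ℳ i, dM x ∈ ℳ (i + 1))
    (hleibM : ∀ (i : ℤ), ∀ b ∈ 𝒜 i, ∀ x : M,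
      dM (b • x) = d b • x + (((-1 : ℤˣ) ^ i : ℤˣ) : ℤ) • (b • dM x))
    (hdM2 : ∀ x : M, dM (dM x) = h • x)
    -- a graded B-submodule L ⊆ M
    (L : Submodule B M)
    (hLhom : ∀ (i : ℤ), ∀ x ∈ L, (DirectSum.decompose ℳ x i : M) ∈ L)
    -- the composite L ↪ M → M ↠ M/L is an isomorphism (of degree 1)
    (hiso : Function.Bijective
      (fun x : L => (Submodule.Quotient.mk (dM (x : M)) : M ⧸ L))) :
    ∃ t : M →+ M,
      (∀ (i : ℤ), ∀ x ∈ ℳ i, t x ∈ ℳ (i - 1)) ∧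
      (∀ (i : ℤ), ∀ b ∈ 𝒜 i, ∀ x : M,
        t (b • x) = (((-1 : ℤˣ) ^ i : ℤˣ) : ℤ) • (b • t x)) ∧
      (∀ x : M, dM (t x) + t (dM x) = x) := by
  classical
  choose t0 ht0 using fun m : M => hiso.2 (Submodule.Quotient.mk m)
  simp only [] at ht0
  -- ht0 : ∀ m, mk (dM ↑(t0 m)) = mk m
  have uniq : ∀ (m : M) (y : L),
      (Submodule.Quotient.mk (dM (y : M)) : M ⧸ L) = Submodule.Quotient.mk m →
      y = t0 m := fun m y hy => hiso.1 (hy.trans (ht0 m).symm)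
  have uniq' : ∀ (m : M) (y : L), m - dM (y : M) ∈ L → y = t0 m := by
    intro m y hy
    exact uniq m y ((Submodule.Quotient.eq L).2 (by simpa using L.neg_mem hy))
  have hx : ∀ m : M, m - dM (t0 m : M) ∈ L := by
    intro m
    have := (Submodule.Quotient.eq L).1 (ht0 m)
    simpa using L.neg_mem this
  -- degree property
  have hmem : ∀ (i : ℤ) (m : M), m ∈ ℳ i → (t0 m : M) ∈ ℳ (i - 1) := by
    intro i m hm
    have hcomp : ∀ j : ℤ, j ≠ i - 1 →
        (DirectSum.decompose ℳ ((t0 m : M)) j : M) = 0 := by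
      intro j hj
      set y : M := (t0 m : M) with hy
      set yj : M := (DirectSum.decompose ℳ y j : M) with hyj
      have hyjL : yj ∈ L := hLhom j _ (t0 m).2
      have hdec : (DirectSum.decompose ℳ (dM y) (j + 1) : M) = dM yj :=
        decompose_shift_aux M ℳ dM hdegM j y
      have hmj : (DirectSum.decompose ℳ m (j + 1) : M) = 0 :=
        DirectSum.decompose_of_mem_ne ℳ hm (by omega)
      have hsplit : (DirectSum.decompose ℳ (m - dM y) (j + 1) : M)
          = (DirectSum.decompose ℳ m (j + 1) : M) - dM yj := by
        rw [DirectSum.decompose_sub]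
        push_cast [DirectSum.sub_apply]
        rw [hdec]
      have hdL : dM yj ∈ L := by
        have h1 : (DirectSum.decompose ℳ (m - dM y) (j + 1) : M) ∈ L :=
          hLhom (j + 1) _ (hx m)
        rw [hsplit, hmj, zero_sub] at h1
        simpa using L.neg_mem h1
      -- now dM yj ∈ L, yj ∈ L imply yj = 0
      have hmk : (Submodule.Quotient.mk (dM ((⟨yj, hyjL⟩ : L) : M)) : M ⧸ L)
          = Submodule.Quotient.mk (dM ((0 : L) : M)) := by
        simp [Submodule.Quotient.mk_eq_zero, hdL]
      have := hiso.1 hmk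
      simpa [hyj] using congrArg (Subtype.val) this
    rw [← DirectSum.sum_support_decompose ℳ ((t0 m : M))]
    apply AddSubgroup.sum_mem
    intro j hjsupp
    by_cases hji : j = i - 1
    · rw [hji]; exact SetLike.coe_mem _
    · rw [hcomp j hji]; exact zero_mem _
  -- additivity
  have hadd : ∀ m m' : M, (t0 (m + m') : M) = (t0 m : M) + (t0 m' : M) := by
    intro m m'
    have : (t0 m + t0 m' : L) = t0 (m + m') := by
      apply uniq'
      have : (m + m') - dM ((t0 m : M) + (t0 m' : M))
          = (m - dM (t0 m : M)) + (m' - dM (t0 m' : M)) := by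
        rw [map_add]; abel
      rw [Submodule.coe_add, this]
      exact L.add_mem (hx m) (hx m')
    rw [← this, Submodule.coe_add]
  refine ⟨AddMonoidHom.mk' (fun m => (t0 m : M)) hadd, ?_, ?_, ?_⟩
  · intro i x hxm
    exact hmem i x hxm
  · intro i b hb m
    set ε : ℤ := (((-1 : ℤˣ) ^ i : ℤˣ) : ℤ) with hε
    have hεε : ∀ z : M, ε • ε • z = z := by
      intro z
      rw [smul_smul, hε, ← Units.val_mul, Int.units_mul_self, Units.val_one, one_smul]
    have key : (⟨ε • (b • (t0 m : M)), L.smul_of_tower_mem ε (L.smul_mem b (t0 m).2)⟩ : L)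
        = t0 (b • m) := by
      apply uniq'
      have hdy : dM (ε • (b • (t0 m : M))) = ε • (d b • (t0 m : M)) + b • dM (t0 m : M) := by
        rw [map_zsmul, hleibM i b hb, smul_add, hεε]
      show b • m - dM (ε • (b • (t0 m : M))) ∈ L
      rw [hdy]
      have : b • m - (ε • (d b • (t0 m : M)) + b • dM (t0 m : M))
          = b • (m - dM (t0 m : M)) - ε • (d b • (t0 m : M)) := by
        rw [smul_sub]; abel
      rw [this]
      exact L.sub_mem (L.smul_mem b (hx m))
        (L.smul_of_tower_mem ε (L.smul_mem (d b) (t0 m).2))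
    show (t0 (b • m) : M) = ε • (b • (t0 m : M))
    rw [← key]
  · intro m
    have key : (⟨m - dM (t0 m : M), hx m⟩ : L) = t0 (dM m) := by
      apply uniq'
      show dM m - dM (m - dM (t0 m : M)) ∈ L
      rw [map_sub, hdM2]
      have : dM m - (dM m - h • (t0 m : M)) = h • (t0 m : M) := by abel
      rw [this]
      exact L.smul_mem h (t0 m).2
    show dM (t0 m : M) + (t0 (dM m) : M) = m
    rw [← key]
    show dM (t0 m : M) + (m - dM (t0 m : M)) = m
    abel
end
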